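/- Let P, Q ∈ M_n(𝔽₂) satisfy P² = P, Q³ = 0, and (P+Q)⁴ + (P+Q)³ = 1 (where 1 is the identity matrix). Then trace(P + Q) = 0. -/
import Mathlib

theorem stmt_5 (n : ℕ) (P Q : Matrix (Fin n) (Fin n) (ZMod 2))
    (hP : P ^ 2 = P) (hQ : Q ^ 3 = 0)
    (hPQ : (P + Q) ^ 4 + (P + Q) ^ 3 = 1) :
    (P + Q).trace = 0 := by
  set A := P + Q with hA
  have h2 : ∀ a : ZMod 2, a + a = 0 := by decide
  have hsq : ∀ a : ZMod 2, a ^ 2 = a := by decide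
  have two : ∀ X : Matrix (Fin n) (Fin n) (ZMod 2), X + X = 0 := by
    intro X; ext i j; simp [h2]
  have frob : ∀ X : Matrix (Fin n) (Fin n) (ZMod 2), (X * X).trace = X.trace := by
    intro X
    have h := ZMod.trace_pow_card (p := 2) X
    calc (X * X).trace = (X ^ 2).trace := by rw [pow_two]
      _ = X.trace ^ 2 := h
      _ = X.trace := hsq _
  have hPP : P * P = P := by rw [← pow_two]; exact hP
  -- A^4 = A^3 + 1
  have h4 : A ^ 4 = A ^ 3 + 1 := by
    calc A ^ 4 = A ^ 4 + (A ^ 3 + A ^ 3) := by rw [two (A ^ 3), add_zero]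
      _ = (A ^ 4 + A ^ 3) + A ^ 3 := by abel
      _ = 1 + A ^ 3 := by rw [hPQ]
      _ = A ^ 3 + 1 := by rw [add_comm]
  have h5 : A ^ 5 = A ^ 3 + A + 1 := by
    calc A ^ 5 = A * A ^ 4 := by noncomm_ring
      _ = A * (A ^ 3 + 1) := by rw [h4]
      _ = A ^ 4 + A := by noncomm_ring
      _ = (A ^ 3 + 1) + A := by rw [h4]
      _ = A ^ 3 + A + 1 := by abel
  have h6 : A ^ 6 = A ^ 3 + A ^ 2 + A + 1 := by
    calc A ^ 6 = A * A ^ 5 := by noncomm_ring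
      _ = A * (A ^ 3 + A + 1) := by rw [h5]
      _ = A ^ 4 + A ^ 2 + A := by noncomm_ring
      _ = (A ^ 3 + 1) + A ^ 2 + A := by rw [h4]
      _ = A ^ 3 + A ^ 2 + A + 1 := by abel
  -- Q = A + P
  have hQA : A + P = Q := by
    rw [hA, show P + Q + P = Q + (P + P) from by abel, two, add_zero]
  -- the expanded relation Q^3 = 0
  have hM : A ^ 3 + A ^ 2 * P + A * P * A + P * A ^ 2 + A * P + P * A * P + P * A + P
      = 0 := by
    have e2 : (A + P) ^ 3 = A ^ 3 + A ^ 2 * P + A * P * A + P * A ^ 2 + A * (P * P)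
        + P * A * P + P * P * A + P * P * P := by noncomm_ring
    simp only [hPP] at e2
    rw [← e2, hQA]; exact hQ
  -- trace of hM
  have eb := congrArg Matrix.trace hM
  simp only [Matrix.trace_add, Matrix.trace_zero] at eb
  have f1 : (A * P * A).trace = (A ^ 2 * P).trace := by
    rw [Matrix.trace_mul_comm (A * P) A, show A * (A * P) = A ^ 2 * P from by noncomm_ring]
  have f2 : (P * A ^ 2).trace = (A ^ 2 * P).trace := Matrix.trace_mul_comm P (A ^ 2)
  have f3 : (P * A * P).trace = (A * P).trace := by
    rw [Matrix.trace_mul_comm (P * A) P, show P * (P * A) = P * P * A from by noncomm_ring,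
      hPP, Matrix.trace_mul_comm P A]
  have f4 : (P * A).trace = (A * P).trace := Matrix.trace_mul_comm P A
  -- trace of hM * (A*P)
  have hM2 := congrArg (fun X => (X * (A * P)).trace) hM
  simp only [add_mul, zero_mul, Matrix.trace_add, Matrix.trace_zero] at hM2
  have g1 : (A ^ 3 * (A * P)).trace = (A ^ 3 * P).trace + P.trace := by
    rw [show A ^ 3 * (A * P) = A ^ 4 * P from by noncomm_ring, h4, add_mul, one_mul,
      Matrix.trace_add]
  have g23 : (A ^ 2 * P * (A * P)).trace = (A * P * A * (A * P)).trace := by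
    rw [Matrix.trace_mul_comm (A ^ 2 * P) (A * P),
      show A * P * (A ^ 2 * P) = A * P * A * (A * P) from by noncomm_ring]
  have g4 : (P * A ^ 2 * (A * P)).trace = (A ^ 3 * P).trace := by
    rw [show P * A ^ 2 * (A * P) = P * (A ^ 3 * P) from by noncomm_ring,
      Matrix.trace_mul_comm P (A ^ 3 * P),
      show A ^ 3 * P * P = A ^ 3 * (P * P) from by noncomm_ring, hPP]
  have g5 : (A * P * (A * P)).trace = (A * P).trace := frob (A * P)
  have g6 : (P * A * P * (A * P)).trace = (A * P).trace := by
    rw [show P * A * P * (A * P) = P * (A * P * A * P) from by noncomm_ring,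
      Matrix.trace_mul_comm P (A * P * A * P),
      show A * P * A * P * P = A * P * A * (P * P) from by noncomm_ring, hPP,
      show A * P * A * P = (A * P) * (A * P) from by noncomm_ring]
    exact frob (A * P)
  have g7 : (P * A * (A * P)).trace = (A ^ 2 * P).trace := by
    rw [show P * A * (A * P) = P * (A ^ 2 * P) from by noncomm_ring,
      Matrix.trace_mul_comm P (A ^ 2 * P),
      show A ^ 2 * P * P = A ^ 2 * (P * P) from by noncomm_ring, hPP]
  have g8 : (P * (A * P)).trace = (A * P).trace := by
    rw [Matrix.trace_mul_comm P (A * P),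
      show A * P * P = A * (P * P) from by noncomm_ring, hPP]
  -- Frobenius trace facts for powers of A
  have t2 : (A ^ 2).trace = A.trace := by rw [pow_two]; exact frob A
  have t4 : (A ^ 4).trace = (A ^ 2).trace := by
    rw [show A ^ 4 = A ^ 2 * A ^ 2 from by noncomm_ring]; exact frob _
  have t6 : (A ^ 6).trace = (A ^ 3).trace := by
    rw [show A ^ 6 = A ^ 3 * A ^ 3 from by noncomm_ring]; exact frob _
  have h4t := congrArg Matrix.trace h4
  simp only [Matrix.trace_add] at h4t
  have h6t := congrArg Matrix.trace h6
  simp only [Matrix.trace_add] at h6t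
  -- assemble: all equations are over the commutative ring ZMod 2
  -- eb : trA³ + trA²P + trAPA + trPA² + trAP + trPAP + trPA + trP = 0
  -- hM2 : 8 terms = 0
  -- From h6t & t6 : tr 1 = trA² + trA ; from h4t & t4 & t2 : trA = trA³ + tr 1
  -- eb + hM2 (after f/g rewrites) : trA³ = 0
  have key : (A ^ 3).trace = 0 := by
    have e1 : (A ^ 3).trace + (A ^ 2 * P).trace + (A * P).trace + P.trace = 0 := by
      linear_combination eb - f1 - f2 - f3 - f4 - h2 (A ^ 2 * P).trace - h2 (A * P).trace
    have e2 : (A ^ 2 * P).trace + (A * P).trace + P.trace = 0 := by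
      linear_combination hM2 - g1 - g23 - g4 - g5 - g6 - g7 - g8
        - h2 (A ^ 3 * P).trace - h2 (A * P * A * (A * P)).trace - h2 (A * P).trace
    linear_combination e1 - e2
  have tr1 : (1 : Matrix (Fin n) (Fin n) (ZMod 2)).trace = 0 := by
    linear_combination t6 - h6t - t2 - h2 A.trace
  linear_combination -t2 - t4 + h4t + key + tr1
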